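/- (Lemma 6.1.) Fix μ > 0. Let M be the supremum (in the extended reals) of μ·R_p + R_c over all tuples x = (R_p, R_c, Σ_p, Σ_cp, Σ_cc, Q) in R_ach,rate that additionally satisfy Tr(Σ_p) ≤ P_p and Tr(Σ_cp) + Tr(Σ_cc) ≤ P_c, and let U be the supremum over all tuples x in R_ach,rate of inf over λ₁ ≥ 0, λ₂ ≥ 0 of L(x, λ₁, λ₂). Then M = U. -/

import Mathlib

open Matrix Filter
open scoped ComplexOrder

noncomputable section

/-- `Mat m n` : complex `m × n` matrix. -/
abbrev Mat (m n : ℕ) := Matrix (Fin m) (Fin n) ℂ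

/-- `LD M = log det (I + M)` (real part of the determinant). -/
def LD {ι : Type*} [Fintype ι] [DecidableEq ι] (M : Matrix ι ι ℂ) : ℝ :=
  Real.log ((1 + M).det.re)

/-- real trace. -/
def rTr {ι : Type*} [Fintype ι] (M : Matrix ι ι ℂ) : ℝ := M.trace.re

/-- `G = [H_pp  H_cp]`. -/
def Gmat {npt nct npr : ℕ} (Hpp : Mat npr npt) (Hcp : Mat npr nct) :
    Matrix (Fin npr) (Fin npt ⊕ Fin nct) ℂ :=
  fromCols Hpp Hcp

/-- `G_α = [H_pp  H_cp/√α]`. -/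
def Galpha {npt nct npr : ℕ} (Hpp : Mat npr npt) (Hcp : Mat npr nct) (α : ℝ) :
    Matrix (Fin npr) (Fin npt ⊕ Fin nct) ℂ :=
  fromCols Hpp (((Real.sqrt α : ℂ))⁻¹ • Hcp)

/-- The achievable region `R_in`. -/
def Rin {npt nct npr ncr : ℕ} (Hpp : Mat npr npt) (Hcp : Mat npr nct) (Hcc : Mat ncr nct)
    (Pp Pc : ℝ) : Set (ℝ × ℝ) :=
  closure (convexHull ℝ
    {R : ℝ × ℝ | 0 ≤ R.1 ∧ 0 ≤ R.2 ∧
      ∃ (Sp : Mat npt npt) (Scp Scc : Mat nct nct) (Q : Mat npt nct),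
        Sp.PosSemidef ∧ Scp.PosSemidef ∧ Scc.PosSemidef ∧
        (fromBlocks Sp Q Qᴴ Scp).PosSemidef ∧
        rTr Sp ≤ Pp ∧ rTr Scp + rTr Scc ≤ Pc ∧
        R.1 ≤ LD (Gmat Hpp Hcp * fromBlocks Sp Q Qᴴ Scp * (Gmat Hpp Hcp)ᴴ
                  + Hcp * Scc * Hcpᴴ)
              - LD (Hcp * Scc * Hcpᴴ) ∧
        R.2 ≤ LD (Hcc * Scc * Hccᴴ)})

/-- The partial outer bound region `R_part,out^α`. -/
def Rpart {npt nct npr ncr : ℕ} (Hpp : Mat npr npt) (Hcp : Mat npr nct) (Hcc : Mat ncr nct)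
    (Pp Pc : ℝ) (α : ℝ) : Set (ℝ × ℝ) :=
  closure (convexHull ℝ
    {R : ℝ × ℝ | 0 ≤ R.1 ∧ 0 ≤ R.2 ∧
      ∃ (Qp : Matrix (Fin npt ⊕ Fin nct) (Fin npt ⊕ Fin nct) ℂ) (Scc : Mat nct nct),
        Qp.PosSemidef ∧ Scc.PosSemidef ∧
        rTr Qp + rTr Scc ≤ Pp + α * Pc ∧
        R.1 ≤ LD (Galpha Hpp Hcp α * Qp * (Galpha Hpp Hcp α)ᴴ
                  + ((α : ℂ))⁻¹ • (Hcp * Scc * Hcpᴴ))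
              - LD (((α : ℂ))⁻¹ • (Hcp * Scc * Hcpᴴ)) ∧
        R.2 ≤ LD (((α : ℂ))⁻¹ • (Hcc * Scc * Hccᴴ))})

/-- Tuples in `R_ach,rate` (no power constraints). -/
def RachRate {npt nct npr ncr : ℕ} (Hpp : Mat npr npt) (Hcp : Mat npr nct) (Hcc : Mat ncr nct)
    (Rp Rc : ℝ) (Sp : Mat npt npt) (Scp Scc : Mat nct nct) (Q : Mat npt nct) : Prop :=
  0 ≤ Rp ∧ 0 ≤ Rc ∧ Sp.PosSemidef ∧ Scp.PosSemidef ∧ Scc.PosSemidef ∧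
  (fromBlocks Sp Q Qᴴ Scp).PosSemidef ∧
  Rp ≤ LD (Gmat Hpp Hcp * fromBlocks Sp Q Qᴴ Scp * (Gmat Hpp Hcp)ᴴ + Hcp * Scc * Hcpᴴ)
        - LD (Hcp * Scc * Hcpᴴ) ∧
  Rc ≤ LD (Hcc * Scc * Hccᴴ)

/-- The Lagrangian `L`. -/
def Lfun {npt nct : ℕ} (Pp Pc μ Rp Rc : ℝ) (Sp : Mat npt npt) (Scp Scc : Mat nct nct)
    (l1 l2 : ℝ) : ℝ :=
  μ * Rp + Rc - l1 * (rTr Sp - Pp) - l2 * (rTr Scp + rTr Scc - Pc)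

/-- The Lagrangian `L₁`. -/
def L1fun {npt nct : ℕ} (Pp Pc μ Rp Rc : ℝ) (Sp : Mat npt npt) (Scp Scc : Mat nct nct)
    (l α : ℝ) : ℝ :=
  μ * Rp + Rc - l * (rTr Sp + α * rTr Scp + α * rTr Scc - Pp - α * Pc)

/-- `K = [0  H_cc/√α]`. -/
def Kmat (npt : ℕ) {nct ncr : ℕ} (Hcc : Mat ncr nct) (α : ℝ) :
    Matrix (Fin ncr) (Fin npt ⊕ Fin nct) ℂ :=
  fromCols 0 (((Real.sqrt α : ℂ))⁻¹ • Hcc)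

/-- `K̄ = [[H_pp, H_cp/√α],[0, H_cc/√α]]`. -/
def Kbar {npt nct npr ncr : ℕ} (Hpp : Mat npr npt) (Hcp : Mat npr nct) (Hcc : Mat ncr nct)
    (α : ℝ) : Matrix (Fin npr ⊕ Fin ncr) (Fin npt ⊕ Fin nct) ℂ :=
  fromBlocks Hpp (((Real.sqrt α : ℂ))⁻¹ • Hcp) 0 (((Real.sqrt α : ℂ))⁻¹ • Hcc)

/-- The region `R₁^α` (licensed user encoded first). -/
def R1reg {npt nct npr ncr : ℕ} (Hpp : Mat npr npt) (Hcp : Mat npr nct) (Hcc : Mat ncr nct)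
    (Pp Pc : ℝ) (α : ℝ) : Set (ℝ × ℝ) :=
  closure (convexHull ℝ
    {R : ℝ × ℝ | 0 ≤ R.1 ∧ 0 ≤ R.2 ∧
      ∃ Qp Qc : Matrix (Fin npt ⊕ Fin nct) (Fin npt ⊕ Fin nct) ℂ,
        Qp.PosSemidef ∧ Qc.PosSemidef ∧ rTr Qp + rTr Qc ≤ Pp + α * Pc ∧
        R.1 ≤ LD (Galpha Hpp Hcp α * Qp * (Galpha Hpp Hcp α)ᴴ
                  + Galpha Hpp Hcp α * Qc * (Galpha Hpp Hcp α)ᴴ)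
              - LD (Galpha Hpp Hcp α * Qc * (Galpha Hpp Hcp α)ᴴ) ∧
        R.2 ≤ LD (Kmat npt Hcc α * Qc * (Kmat npt Hcc α)ᴴ)})

/-- The region `R₂^α` (cognitive user encoded first). -/
def R2reg {npt nct npr ncr : ℕ} (Hpp : Mat npr npt) (Hcp : Mat npr nct) (Hcc : Mat ncr nct)
    (Pp Pc : ℝ) (α : ℝ) : Set (ℝ × ℝ) :=
  closure (convexHull ℝ
    {R : ℝ × ℝ | 0 ≤ R.1 ∧ 0 ≤ R.2 ∧
      ∃ Qp Qc : Matrix (Fin npt ⊕ Fin nct) (Fin npt ⊕ Fin nct) ℂ,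
        Qp.PosSemidef ∧ Qc.PosSemidef ∧ rTr Qp + rTr Qc ≤ Pp + α * Pc ∧
        R.1 ≤ LD (Galpha Hpp Hcp α * Qp * (Galpha Hpp Hcp α)ᴴ) ∧
        R.2 ≤ LD (Kmat npt Hcc α * Qp * (Kmat npt Hcc α)ᴴ
                  + Kmat npt Hcc α * Qc * (Kmat npt Hcc α)ᴴ)
              - LD (Kmat npt Hcc α * Qp * (Kmat npt Hcc α)ᴴ)})

/-- The dirty-paper-coding region `D^α`. -/
def Dreg {npt nct npr ncr : ℕ} (Hpp : Mat npr npt) (Hcp : Mat npr nct) (Hcc : Mat ncr nct)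
    (Pp Pc : ℝ) (α : ℝ) : Set (ℝ × ℝ) :=
  closure (convexHull ℝ
    (R1reg Hpp Hcp Hcc Pp Pc α ∪ R2reg Hpp Hcp Hcc Pp Pc α))

/-- `Σ_z = [[I, Q_z],[Q_z†, I]]`. -/
def Sigmaz {npr ncr : ℕ} (Qz : Mat npr ncr) :
    Matrix (Fin npr ⊕ Fin ncr) (Fin npr ⊕ Fin ncr) ℂ :=
  fromBlocks 1 Qz Qzᴴ 1

/-- The outer bound region `R_out^{α,Σ_z}`. -/
def Rout {npt nct npr ncr : ℕ} (Hpp : Mat npr npt) (Hcp : Mat npr nct) (Hcc : Mat ncr nct)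
    (Pp Pc : ℝ) (α : ℝ) (Qz : Mat npr ncr) : Set (ℝ × ℝ) :=
  closure (convexHull ℝ
    {R : ℝ × ℝ | 0 ≤ R.1 ∧ 0 ≤ R.2 ∧
      ∃ Qp Qc : Matrix (Fin npt ⊕ Fin nct) (Fin npt ⊕ Fin nct) ℂ,
        Qp.PosSemidef ∧ Qc.PosSemidef ∧ rTr Qp + rTr Qc ≤ Pp + α * Pc ∧
        R.1 ≤ LD (Galpha Hpp Hcp α * Qp * (Galpha Hpp Hcp α)ᴴ
                  + Galpha Hpp Hcp α * Qc * (Galpha Hpp Hcp α)ᴴ)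
              - LD (Galpha Hpp Hcp α * Qc * (Galpha Hpp Hcp α)ᴴ) ∧
        R.2 ≤ Real.log ((Sigmaz Qz + Kbar Hpp Hcp Hcc α * Qc * (Kbar Hpp Hcp Hcc α)ᴴ).det.re)
              - Real.log ((Sigmaz Qz).det.re)})

private lemma key_lt (v c y : ℝ) (hc : 0 < c) :
    v - (max 0 ((v - y)/c + 1)) * c < y := by
  have h1 : (v - y)/c + 1 ≤ max 0 ((v - y)/c + 1) := le_max_right _ _
  have h2 : (v - y)/c * c = v - y := div_mul_cancel₀ _ hc.ne'
  nlinarith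

lemma inf_lagrange (v a b : ℝ) :
    (⨅ l1 ∈ Set.Ici (0:ℝ), ⨅ l2 ∈ Set.Ici (0:ℝ), ((v - l1*a - l2*b : ℝ) : EReal))
    = if a ≤ 0 ∧ b ≤ 0 then (v : EReal) else ⊥ := by
  split_ifs with h
  · apply le_antisymm
    · refine iInf₂_le_of_le 0 Set.self_mem_Ici ?_
      refine iInf₂_le_of_le 0 Set.self_mem_Ici ?_
      norm_num
    · refine le_iInf₂ fun l1 hl1 => le_iInf₂ fun l2 hl2 => ?_
      rw [EReal.coe_le_coe_iff]
      simp only [Set.mem_Ici] at hl1 hl2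
      nlinarith [h.1, h.2]
  · rw [EReal.eq_bot_iff_forall_lt]
    intro y
    push_neg at h
    rcases lt_or_ge 0 a with ha | ha
    · refine lt_of_le_of_lt (iInf₂_le_of_le (max 0 ((v - y)/a + 1)) (Set.mem_Ici.mpr (le_max_left _ _))
        (iInf₂_le_of_le 0 Set.self_mem_Ici le_rfl)) ?_
      rw [show v - max 0 ((v - y)/a + 1) * a - 0 * b = v - max 0 ((v - y)/a + 1) * a by ring]
      exact EReal.coe_lt_coe_iff.mpr (key_lt v a y ha)
    · have hb : 0 < b := h ha
      refine lt_of_le_of_lt (iInf₂_le_of_le 0 Set.self_mem_Ici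
        (iInf₂_le_of_le (max 0 ((v - y)/b + 1)) (Set.mem_Ici.mpr (le_max_left _ _)) le_rfl)) ?_
      rw [show v - 0 * a - max 0 ((v - y)/b + 1) * b = v - max 0 ((v - y)/b + 1) * b by ring]
      exact EReal.coe_lt_coe_iff.mpr (key_lt v b y hb)

theorem statement3 {npt nct npr ncr : ℕ}
    (hnpt : 0 < npt) (hnct : 0 < nct) (hnpr : 0 < npr) (hncr : 0 < ncr)
    (Hpp : Mat npr npt) (Hcp : Mat npr nct) (Hcc : Mat ncr nct)
    (Pp Pc : ℝ) (hPp : 0 < Pp) (hPc : 0 < Pc) (μ : ℝ) (hμ : 0 < μ) :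
    (⨆ Rp : ℝ, ⨆ Rc : ℝ, ⨆ Sp : Mat npt npt, ⨆ Scp : Mat nct nct, ⨆ Scc : Mat nct nct,
      ⨆ Q : Mat npt nct,
      ⨆ _ : RachRate Hpp Hcp Hcc Rp Rc Sp Scp Scc Q ∧
              rTr Sp ≤ Pp ∧ rTr Scp + rTr Scc ≤ Pc,
        ((μ * Rp + Rc : ℝ) : EReal)) =
    (⨆ Rp : ℝ, ⨆ Rc : ℝ, ⨆ Sp : Mat npt npt, ⨆ Scp : Mat nct nct, ⨆ Scc : Mat nct nct,
      ⨆ Q : Mat npt nct,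
      ⨆ _ : RachRate Hpp Hcp Hcc Rp Rc Sp Scp Scc Q,
        ⨅ l1 ∈ Set.Ici (0 : ℝ), ⨅ l2 ∈ Set.Ici (0 : ℝ),
          ((Lfun Pp Pc μ Rp Rc Sp Scp Scc l1 l2 : ℝ) : EReal)) := by
  refine iSup_congr fun Rp => iSup_congr fun Rc => iSup_congr fun Sp => iSup_congr fun Scp =>
    iSup_congr fun Scc => iSup_congr fun Q => ?_
  have key : (⨅ l1 ∈ Set.Ici (0 : ℝ), ⨅ l2 ∈ Set.Ici (0 : ℝ),
      ((Lfun Pp Pc μ Rp Rc Sp Scp Scc l1 l2 : ℝ) : EReal))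
      = if (rTr Sp - Pp ≤ 0 ∧ rTr Scp + rTr Scc - Pc ≤ 0) then ((μ * Rp + Rc : ℝ) : EReal)
        else ⊥ := by
    simpa only [Lfun] using
      inf_lagrange (μ * Rp + Rc) (rTr Sp - Pp) (rTr Scp + rTr Scc - Pc)
  rw [key]
  by_cases hR : RachRate Hpp Hcp Hcc Rp Rc Sp Scp Scc Q
  · by_cases hC : rTr Sp ≤ Pp ∧ rTr Scp + rTr Scc ≤ Pc
    · simp [hR, hC.1, hC.2, sub_nonpos.mpr hC.1, sub_nonpos.mpr hC.2]
    · have hC' : ¬(rTr Sp - Pp ≤ 0 ∧ rTr Scp + rTr Scc - Pc ≤ 0) := by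
        simpa [sub_nonpos] using hC
      simp [hR, hC, hC']
  · simp [hR]


end
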